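/- For integers q, n, k with 1 ≤ k < n, the number of elements of C_{n,k} having no cycle whose length divides q satisfies: N̄(C_{n,k}) = [k ∤ q]·N̄(S_{n-k}) + (n-k)·N̄(C_{n,k+1}). -/

import Mathlib

def cosetC (n k : ℕ) : Set (Equiv.Perm (Fin n)) :=
  {σ | ∃ g : Equiv.Perm (Fin n), (∀ i : Fin n, (i : ℕ) < k - 1 → g i = i) ∧
    σ = g * ((List.finRange n).take k).formPerm}

/-- No cycle of length dividing q (fixed points count as cycles of length 1). -/
def NoCycleLenDvd {n : ℕ} (q : ℕ) (σ : Equiv.Perm (Fin n)) : Prop :=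
  ∀ x : Fin n, ¬ Function.minimalPeriod σ x ∣ q


open Equiv Function List

lemma minPeriod_congr {α β : Type*} {f : α → α} {g : β → β} {x : α} {y : β}
    (h : ∀ m, Function.IsPeriodicPt f m x ↔ Function.IsPeriodicPt g m y) :
    Function.minimalPeriod f x = Function.minimalPeriod g y := by
  by_cases hx : x ∈ Function.periodicPts f
  · obtain ⟨m, hm, hmp⟩ := Function.mem_periodicPts.1 hx
    have hy : y ∈ Function.periodicPts g := Function.mk_mem_periodicPts hm ((h m).1 hmp)
    exact le_antisymm
      (Function.IsPeriodicPt.minimalPeriod_le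
        (Function.minimalPeriod_pos_of_mem_periodicPts hy)
        ((h _).2 (Function.isPeriodicPt_minimalPeriod g y)))
      (Function.IsPeriodicPt.minimalPeriod_le
        (Function.minimalPeriod_pos_of_mem_periodicPts hx)
        ((h _).1 (Function.isPeriodicPt_minimalPeriod f x)))
  · have hy : y ∉ Function.periodicPts g := fun hy => by
      obtain ⟨m, hm, hmp⟩ := Function.mem_periodicPts.1 hy
      exact hx (Function.mk_mem_periodicPts hm ((h m).2 hmp))
    rw [Function.minimalPeriod_eq_zero_of_notMem_periodicPts hx,
      Function.minimalPeriod_eq_zero_of_notMem_periodicPts hy]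

lemma perm_isPeriodicPt_iff {α : Type*} (σ : Equiv.Perm α) (m : ℕ) (x : α) :
    Function.IsPeriodicPt ⇑σ m x ↔ (σ ^ m) x = x := Iff.rfl

lemma minPeriod_conj {α : Type*} (π σ : Equiv.Perm α) (x : α) :
    Function.minimalPeriod ⇑(π * σ * π⁻¹) (π x) = Function.minimalPeriod ⇑σ x := by
  refine minPeriod_congr fun m => ?_
  rw [perm_isPeriodicPt_iff, perm_isPeriodicPt_iff, conj_pow]
  simp [Equiv.Perm.mul_apply]

lemma NoCycleLenDvd_conj {n q : ℕ} (π σ : Equiv.Perm (Fin n))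
    (h : ∀ x : Fin n, ¬ Function.minimalPeriod σ x ∣ q) :
    ∀ x : Fin n, ¬ Function.minimalPeriod ⇑(π * σ * π⁻¹) x ∣ q := by
  intro x
  have := minPeriod_conj π σ (π⁻¹ x)
  simp only [Equiv.Perm.coe_inv, Equiv.apply_symm_apply] at this
  rw [this]; exact h _


section
variable (n k : ℕ)

def lC : List (Fin n) := (List.finRange n).take k

lemma lC_length (hkn : k ≤ n) : (lC n k).length = k := by
  simp [lC, hkn]

lemma lC_nodup : (lC n k).Nodup := (List.nodup_finRange n).sublist (List.take_sublist _ _)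

lemma lC_getElem (i : ℕ) (hkn : k ≤ n) (hi : i < k) :
    (lC n k)[i]'(by rw [lC_length n k hkn]; exact hi) = ⟨i, lt_of_lt_of_le hi hkn⟩ := by
  simp [lC]

lemma lC_mem (x : Fin n) (hkn : k ≤ n) : x ∈ lC n k ↔ (x : ℕ) < k := by
  constructor
  · intro hx
    obtain ⟨i, hi, rfl⟩ := List.getElem_of_mem hx
    rw [lC_length n k hkn] at hi
    rw [lC_getElem n k i hkn hi]
    exact hi
  · intro hx
    have h2 := lC_getElem n k x hkn hx
    have : x = (lC n k)[(x:ℕ)]'(by rw [lC_length n k hkn]; exact hx) := by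
      rw [h2]
    rw [this]
    exact List.getElem_mem _
end

section
variable (n k : ℕ)

lemma cC_pow (hk : 1 ≤ k) (hkn : k ≤ n) (m i : ℕ) (hi : i < k) :
    ((lC n k).formPerm ^ m) ⟨i, lt_of_lt_of_le hi hkn⟩ =
      ⟨(i + m) % k, lt_of_lt_of_le (Nat.mod_lt _ hk) hkn⟩ := by
  have h1 : i < (lC n k).length := by rw [lC_length n k hkn]; exact hi
  have := List.formPerm_pow_apply_getElem (lC n k) (lC_nodup n k) m i h1
  rw [lC_getElem n k i hkn hi] at this
  rw [this]
  have hlen : (lC n k).length = k := lC_length n k hkn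
  have h2 : (i + m) % (lC n k).length < k := by rw [hlen]; exact Nat.mod_lt _ hk
  have h3 := lC_getElem n k ((i + m) % (lC n k).length) hkn h2
  rw [h3]
  simp [hlen]

lemma cC_apply (hk : 1 ≤ k) (hkn : k ≤ n) (i : ℕ) (hi : i < k) :
    (lC n k).formPerm ⟨i, lt_of_lt_of_le hi hkn⟩ =
      ⟨(i + 1) % k, lt_of_lt_of_le (Nat.mod_lt _ hk) hkn⟩ := by
  have := cC_pow n k hk hkn 1 i hi
  rwa [pow_one] at this

lemma cC_apply_of_ge (hkn : k ≤ n) (x : Fin n) (hx : k ≤ (x : ℕ)) :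
    (lC n k).formPerm x = x :=
  List.formPerm_apply_of_notMem (by rw [lC_mem n k x hkn]; omega)

lemma cC_lt (hk : 1 ≤ k) (hkn : k ≤ n) (x : Fin n) (hx : (x : ℕ) < k) :
    (((lC n k).formPerm x : Fin n) : ℕ) < k := by
  have : x = (⟨(x : ℕ), lt_of_lt_of_le hx hkn⟩ : Fin n) := rfl
  rw [this, cC_apply n k hk hkn _ hx]
  exact Nat.mod_lt _ hk
end


section
variable (n k : ℕ)

lemma mem_cosetC_iff (σ : Equiv.Perm (Fin n)) :
    σ ∈ cosetC n k ↔
      ∀ x : Fin n, (((lC n k).formPerm x : Fin n) : ℕ) < k - 1 → σ x = (lC n k).formPerm x := by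
  constructor
  · rintro ⟨g, hg, rfl⟩ x hx
    show g ((lC n k).formPerm x) = _
    exact hg _ hx
  · intro h
    refine ⟨σ * ((lC n k).formPerm)⁻¹, fun j hj => ?_, (inv_mul_cancel_right σ _).symm⟩
    have hc : (lC n k).formPerm (((lC n k).formPerm)⁻¹ j) = j := Equiv.apply_symm_apply _ _
    show σ (((lC n k).formPerm)⁻¹ j) = j
    rw [h _ (by rw [hc]; exact hj), hc]

lemma mem_cosetC_iff' (hk : 1 ≤ k) (hkn : k ≤ n) (σ : Equiv.Perm (Fin n)) :
    σ ∈ cosetC n k ↔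
      (∀ i : ℕ, (hi : i + 2 < k) → σ ⟨i, by omega⟩ = ⟨i + 1, by omega⟩) ∧
        (2 ≤ k → σ ⟨k - 1, by omega⟩ = ⟨0, by omega⟩) := by
  rw [mem_cosetC_iff]
  constructor
  · intro h
    constructor
    · intro i hi
      have hc := cC_apply n k hk hkn i (by omega)
      have hmod : (i + 1) % k = i + 1 := Nat.mod_eq_of_lt (by omega)
      have := h ⟨i, by omega⟩ (by rw [hc]; simp [hmod]; omega)
      rw [this, hc]
      simp [hmod]
    · intro h2
      have hc := cC_apply n k hk hkn (k - 1) (by omega)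
      have hmod : (k - 1 + 1) % k = 0 := by
        have : k - 1 + 1 = k := by omega
        simp [this]
      have := h ⟨k - 1, by omega⟩ (by rw [hc]; simp [hmod]; omega)
      rw [this, hc]
      simp [hmod]
  · rintro ⟨h1, h2⟩ x hx
    by_cases hxk : (x : ℕ) < k
    · have hx0 : x = (⟨(x : ℕ), by omega⟩ : Fin n) := rfl
      have hc := cC_apply n k hk hkn (x : ℕ) hxk
      by_cases hlast : (x : ℕ) = k - 1
      · have h2k : 2 ≤ k := by
          by_contra hcon
          have hk1 : k = 1 := by omega
          rw [hx0, hc] at hx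
          simp [hk1] at hx
        rw [hx0, hc]
        have hmod : ((x : ℕ) + 1) % k = 0 := by
          have : (x : ℕ) + 1 = k := by omega
          simp [this]
        simp only [hmod]
        have hxe : (⟨(x : ℕ), by omega⟩ : Fin n) = ⟨k - 1, by omega⟩ := Fin.ext (by simpa using hlast)
        rw [hxe]
        exact h2 h2k
      · have hx1 : (x : ℕ) + 1 < k := by omega
        have hmod : ((x : ℕ) + 1) % k = (x : ℕ) + 1 := Nat.mod_eq_of_lt hx1
        rw [hx0, hc] at hx ⊢
        simp only [hmod] at hx ⊢
        have hcond : (x : ℕ) + 2 < k := by omega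
        exact h1 (x : ℕ) hcond
    · exfalso
      rw [cC_apply_of_ge n k hkn x (by omega)] at hx
      omega
end

section
variable (n k : ℕ)

def eEquiv (hkn : k ≤ n) : Fin (n - k) ≃ {x : Fin n // k ≤ (x : ℕ)} where
  toFun y := ⟨⟨(y : ℕ) + k, by omega⟩, by simp⟩
  invFun x := ⟨(x : ℕ) - k, by omega⟩
  left_inv y := by ext; simp
  right_inv x := by
    have := x.2
    ext
    simp
    omega

def GC (hkn : k ≤ n) (τ : Equiv.Perm (Fin (n - k))) : Equiv.Perm (Fin n) :=
  τ.extendDomain (eEquiv n k hkn) * (lC n k).formPerm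

lemma GC_injective (hkn : k ≤ n) : Function.Injective (GC n k hkn) := by
  intro τ τ' h
  have := mul_right_cancel h
  exact Equiv.Perm.extendDomainHom_injective (eEquiv n k hkn) this

lemma GC_apply_lt (hk : 1 ≤ k) (hkn : k ≤ n) (τ : Equiv.Perm (Fin (n - k))) (i : ℕ) (hi : i < k) :
    GC n k hkn τ ⟨i, by omega⟩ = ⟨(i + 1) % k, by have := Nat.mod_lt (i+1) hk; omega⟩ := by
  show τ.extendDomain (eEquiv n k hkn) ((lC n k).formPerm ⟨i, by omega⟩) = _
  rw [cC_apply n k hk hkn i hi]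
  exact Equiv.Perm.extendDomain_apply_not_subtype _ _ (by simp; exact Nat.mod_lt _ hk)

lemma GC_disj (hkn : k ≤ n) (τ : Equiv.Perm (Fin (n - k))) :
    Equiv.Perm.Disjoint (τ.extendDomain (eEquiv n k hkn)) (lC n k).formPerm := by
  intro x
  by_cases hx : k ≤ (x : ℕ)
  · exact Or.inr (cC_apply_of_ge n k hkn x hx)
  · exact Or.inl (Equiv.Perm.extendDomain_apply_not_subtype _ _ hx)

lemma GC_pow (hkn : k ≤ n) (τ : Equiv.Perm (Fin (n - k))) (m : ℕ) :
    (GC n k hkn τ) ^ m = (τ ^ m).extendDomain (eEquiv n k hkn) * (lC n k).formPerm ^ m := by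
  rw [GC, (GC_disj n k hkn τ).commute.mul_pow, Equiv.Perm.extendDomain_pow]

lemma pow_fix {α : Type*} (σ : Equiv.Perm α) (x : α) (h : σ x = x) (m : ℕ) : (σ ^ m) x = x := by
  induction m with
  | zero => simp
  | succ m ih => rw [pow_succ, Equiv.Perm.mul_apply, h, ih]

lemma mod_eq_iff_dvd (k i m : ℕ) (hk : 1 ≤ k) (hi : i < k) : (i + m) % k = i ↔ k ∣ m := by
  rw [Nat.add_mod, Nat.mod_eq_of_lt hi]
  have hr : m % k < k := Nat.mod_lt _ hk
  constructor
  · intro h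
    rcases Nat.lt_or_ge (i + m % k) k with hlt | hge
    · rw [Nat.mod_eq_of_lt hlt] at h
      exact Nat.dvd_of_mod_eq_zero (by omega)
    · rw [Nat.mod_eq_sub_mod hge, Nat.mod_eq_of_lt (by omega)] at h
      omega
  · intro h
    rw [Nat.mod_eq_zero_of_dvd h, Nat.add_zero, Nat.mod_eq_of_lt hi]

lemma GC_minPeriod_lt (hk : 1 ≤ k) (hkn : k ≤ n) (τ : Equiv.Perm (Fin (n - k)))
    (i : ℕ) (hi : i < k) :
    Function.minimalPeriod ⇑(GC n k hkn τ) (⟨i, by omega⟩ : Fin n) = k := by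
  have key : ∀ m : ℕ, Function.IsPeriodicPt ⇑(GC n k hkn τ) m (⟨i, by omega⟩ : Fin n) ↔ k ∣ m := by
    intro m
    rw [perm_isPeriodicPt_iff, GC_pow, Equiv.Perm.mul_apply, cC_pow n k hk hkn m i hi,
      Equiv.Perm.extendDomain_apply_not_subtype _ _ (by simp; exact Nat.mod_lt _ hk)]
    rw [Fin.mk.injEq]
    exact mod_eq_iff_dvd k i m hk hi
  have hpk : Function.IsPeriodicPt ⇑(GC n k hkn τ) k (⟨i, by omega⟩ : Fin n) := (key k).2 dvd_rfl
  have hple : Function.minimalPeriod ⇑(GC n k hkn τ) (⟨i, by omega⟩ : Fin n) ≤ k :=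
    hpk.minimalPeriod_le hk
  have hppos : 0 < Function.minimalPeriod ⇑(GC n k hkn τ) (⟨i, by omega⟩ : Fin n) :=
    hpk.minimalPeriod_pos hk
  have hdvd : k ∣ Function.minimalPeriod ⇑(GC n k hkn τ) (⟨i, by omega⟩ : Fin n) :=
    (key _).1 (Function.isPeriodicPt_minimalPeriod _ _)
  exact le_antisymm hple (Nat.le_of_dvd hppos hdvd)
end

section
variable (n k : ℕ)

lemma GC_minPeriod_ge (hkn : k ≤ n) (τ : Equiv.Perm (Fin (n - k))) (y : Fin (n - k)) :
    Function.minimalPeriod ⇑(GC n k hkn τ) ((eEquiv n k hkn y : Fin n)) =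
      Function.minimalPeriod ⇑τ y := by
  refine minPeriod_congr fun m => ?_
  rw [perm_isPeriodicPt_iff, perm_isPeriodicPt_iff, GC_pow, Equiv.Perm.mul_apply]
  have hge : k ≤ ((eEquiv n k hkn y : Fin n) : ℕ) := (eEquiv n k hkn y).2
  rw [pow_fix _ _ (cC_apply_of_ge n k hkn _ hge)]
  rw [Equiv.Perm.extendDomain_apply_image]
  constructor
  · intro h
    have := Subtype.ext h
    exact (eEquiv n k hkn).injective this
  · intro h
    rw [h]

lemma GC_noCycle_iff (hk : 1 ≤ k) (hkn : k ≤ n) (q : ℕ) (τ : Equiv.Perm (Fin (n - k))) :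
    (∀ x : Fin n, ¬ Function.minimalPeriod ⇑(GC n k hkn τ) x ∣ q) ↔
      (¬ k ∣ q ∧ ∀ y : Fin (n - k), ¬ Function.minimalPeriod ⇑τ y ∣ q) := by
  constructor
  · intro h
    constructor
    · have := h ⟨0, by omega⟩
      rwa [GC_minPeriod_lt n k hk hkn τ 0 hk] at this
    · intro y
      have := h ((eEquiv n k hkn y : Fin n))
      rwa [GC_minPeriod_ge n k hkn τ y] at this
  · rintro ⟨hq, h⟩ x
    by_cases hx : (x : ℕ) < k
    · have hx0 : x = (⟨(x : ℕ), by omega⟩ : Fin n) := rfl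
      rw [hx0, GC_minPeriod_lt n k hk hkn τ _ hx]
      exact hq
    · set y := (eEquiv n k hkn).symm ⟨x, by omega⟩ with hy
      have hxy : (eEquiv n k hkn y : Fin n) = x := by
        rw [hy, Equiv.apply_symm_apply]
      rw [← hxy, GC_minPeriod_ge n k hkn τ y]
      exact h y

lemma closed_iff (hk : 1 ≤ k) (hkn : k ≤ n) (σ : Equiv.Perm (Fin n)) :
    (σ ∈ cosetC n k ∧ ((σ ⟨k - 2, by omega⟩ : Fin n) : ℕ) = k - 1) ↔
      ∀ i : ℕ, (hi : i < k) →
        σ ⟨i, by omega⟩ = ⟨(i + 1) % k, by have := Nat.mod_lt (i+1) hk; omega⟩ := by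
  rw [mem_cosetC_iff' n k hk hkn]
  constructor
  · rintro ⟨⟨h1, h2⟩, hm⟩ i hi
    rcases Nat.lt_or_ge (i + 2) k with hcase | hcase
    · have := h1 i hcase
      rw [this]
      exact Fin.ext (by simp [Nat.mod_eq_of_lt (show i + 1 < k by omega)])
    · by_cases hk1 : k = 1
      · subst hk1
        have hi0 : i = 0 := by omega
        subst hi0
        exact Fin.ext (by simpa using hm)
      · have h2k : 2 ≤ k := by omega
        rcases Nat.eq_or_lt_of_le hcase with heq | hlt
        · -- i = k - 2
          have hik : i = k - 2 := by omega
          subst hik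
          have hmodv : (k - 2 + 1) % k = k - 1 := by
            rw [Nat.mod_eq_of_lt (by omega)]
            omega
          apply Fin.ext
          rw [hm]
          exact hmodv.symm
        · -- i = k - 1
          have hik : i = k - 1 := by omega
          subst hik
          have := h2 h2k
          rw [this]
          apply Fin.ext
          have h0 : (k - 1 + 1) % k = 0 := by
            have : k - 1 + 1 = k := by omega
            simp [this]
          simp [h0]
  · intro h
    have hm2 : k - 2 < k := by omega
    have hmod : (k - 2 + 1) % k = k - 1 := by
      rcases Nat.eq_or_lt_of_le hk with h1 | h2
      · simp [← h1]
      · rw [Nat.mod_eq_of_lt (by omega)]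
        omega
    refine ⟨⟨fun i hi => ?_, fun h2k => ?_⟩, ?_⟩
    · have := h i (by omega)
      rw [this]
      exact Fin.ext (by simp [Nat.mod_eq_of_lt (show i + 1 < k by omega)])
    · have := h (k - 1) (by omega)
      rw [this]
      apply Fin.ext
      have h0 : (k - 1 + 1) % k = 0 := by
        have : k - 1 + 1 = k := by omega
        simp [this]
      simp [h0]
    · rw [h (k - 2) hm2]
      simp [hmod]
end

section
variable (n k q : ℕ)

lemma closed_eq_image (hk : 1 ≤ k) (hkn : k ≤ n) :
    {σ : Equiv.Perm (Fin n) | σ ∈ cosetC n k ∧ (∀ x, ¬ Function.minimalPeriod ⇑σ x ∣ q) ∧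
        ((σ ⟨k - 2, by omega⟩ : Fin n) : ℕ) = k - 1} =
      (GC n k hkn) '' {τ | ¬ k ∣ q ∧ ∀ y, ¬ Function.minimalPeriod ⇑τ y ∣ q} := by
  ext σ
  simp only [Set.mem_setOf_eq, Set.mem_image]
  constructor
  · rintro ⟨hC, hP, hm⟩
    -- construct τ
    set c := (lC n k).formPerm with hc
    set g := σ * c⁻¹ with hg
    have hagree := (closed_iff n k hk hkn σ).1 ⟨hC, hm⟩
    have hfix : ∀ j : Fin n, (j : ℕ) < k → g j = j := by
      intro j hj
      have hx : (c⁻¹ j : Fin n) = c⁻¹ j := rfl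
      by_cases hxk : ((c⁻¹ j : Fin n) : ℕ) < k
      · have : σ (c⁻¹ j) = c (c⁻¹ j) := by
          have h1 : (c⁻¹ j : Fin n) = ⟨((c⁻¹ j : Fin n) : ℕ), by omega⟩ := rfl
          rw [h1, hagree _ hxk, ← cC_apply n k hk hkn _ hxk, ← h1]
        show σ (c⁻¹ j) = j
        rw [this]; exact Equiv.apply_symm_apply _ _
      · exfalso
        have := cC_apply_of_ge n k hkn (c⁻¹ j) (by omega)
        rw [← hc] at this
        have hj2 : c (c⁻¹ j) = j := Equiv.apply_symm_apply _ _
        rw [this] at hj2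
        rw [hj2] at hxk
        omega
    have hp : ∀ x : Fin n, k ≤ (x : ℕ) ↔ k ≤ ((g x : Fin n) : ℕ) := by
      intro x
      constructor
      · intro hx
        by_contra hcon
        have h1 : g (g x) = g x := hfix _ (by omega)
        have := g.injective h1
        rw [this] at hcon
        omega
      · intro hgx
        by_contra hcon
        rw [hfix x (by omega)] at hgx
        omega
    set ρ := g.subtypePerm (p := fun x : Fin n => k ≤ (x : ℕ)) (fun x => (hp x).symm) with hρ
    set τ := ((eEquiv n k hkn).symm.permCongr ρ : Equiv.Perm (Fin (n - k))) with hτ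
    have hGτ : GC n k hkn τ = σ := by
      refine Equiv.ext fun x => ?_
      by_cases hx : (x : ℕ) < k
      · have hx0 : x = (⟨(x : ℕ), by omega⟩ : Fin n) := rfl
        rw [hx0, GC_apply_lt n k hk hkn τ _ hx, hagree _ hx]
      · show τ.extendDomain (eEquiv n k hkn) (c x) = σ x
        have hcx : c x = x := cC_apply_of_ge n k hkn x (by omega)
        rw [hcx]
        rw [τ.extendDomain_apply_subtype (eEquiv n k hkn) (show k ≤ (x:ℕ) by omega)]
        have : τ ((eEquiv n k hkn).symm ⟨x, by omega⟩) =
            (eEquiv n k hkn).symm (ρ ⟨x, by omega⟩) := by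
          rw [hτ]
          simp [Equiv.permCongr_apply]
        rw [this, Equiv.apply_symm_apply]
        show (g x : Fin n) = σ x
        have hcinv : c⁻¹ x = x := by
          conv_lhs => rw [← hcx]
          exact Equiv.symm_apply_apply _ _
        rw [hg]
        show σ (c⁻¹ x) = σ x
        rw [hcinv]
    refine ⟨τ, ?_, hGτ⟩
    rw [← GC_noCycle_iff n k hk hkn q τ, hGτ]
    exact hP
  · rintro ⟨τ, ⟨hq, hτ⟩, rfl⟩
    have hP : ∀ x, ¬ Function.minimalPeriod ⇑(GC n k hkn τ) x ∣ q :=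
      (GC_noCycle_iff n k hk hkn q τ).2 ⟨hq, hτ⟩
    have hcl : ∀ i : ℕ, (hi : i < k) → GC n k hkn τ ⟨i, by omega⟩ =
        ⟨(i + 1) % k, by have := Nat.mod_lt (i+1) hk; omega⟩ :=
      fun i hi => GC_apply_lt n k hk hkn τ i hi
    have := (closed_iff n k hk hkn _).2 hcl
    exact ⟨this.1, hP, this.2⟩

lemma ncard_closed (hk : 1 ≤ k) (hkn : k ≤ n) :
    {σ : Equiv.Perm (Fin n) | σ ∈ cosetC n k ∧ (∀ x, ¬ Function.minimalPeriod ⇑σ x ∣ q) ∧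
        ((σ ⟨k - 2, by omega⟩ : Fin n) : ℕ) = k - 1}.ncard =
      (if ¬ k ∣ q then 1 else 0) *
        {τ : Equiv.Perm (Fin (n - k)) | ∀ y, ¬ Function.minimalPeriod ⇑τ y ∣ q}.ncard := by
  rw [closed_eq_image n k q hk hkn,
    Set.ncard_image_of_injective _ (GC_injective n k hkn)]
  by_cases hq : k ∣ q
  · have : {τ : Equiv.Perm (Fin (n - k)) |
        ¬ k ∣ q ∧ ∀ y, ¬ Function.minimalPeriod ⇑τ y ∣ q} = ∅ := by
      ext τ; simp [hq]
    rw [this]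
    simp [hq]
  · have : {τ : Equiv.Perm (Fin (n - k)) |
        ¬ k ∣ q ∧ ∀ y, ¬ Function.minimalPeriod ⇑τ y ∣ q} =
        {τ : Equiv.Perm (Fin (n - k)) | ∀ y, ¬ Function.minimalPeriod ⇑τ y ∣ q} := by
      ext τ; simp [hq]
    rw [this]
    simp [hq]
end

section
variable (n k : ℕ)

set_option maxHeartbeats 1000000 in
lemma dichotomy (hk : 1 ≤ k) (hkn : k ≤ n) (σ : Equiv.Perm (Fin n)) (hC : σ ∈ cosetC n k) :
    ((σ ⟨k - 2, by omega⟩ : Fin n) : ℕ) = k - 1 ∨ k ≤ ((σ ⟨k - 2, by omega⟩ : Fin n) : ℕ) := by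
  obtain ⟨h1, h2⟩ := (mem_cosetC_iff' n k hk hkn σ).1 hC
  by_contra hcon
  push_neg at hcon
  generalize hw : σ ⟨k - 2, by omega⟩ = w at hcon
  obtain ⟨hne, hlt⟩ := hcon
  have h2k : 2 ≤ k := by omega
  by_cases hv0 : (w : ℕ) = 0
  · have he : σ ⟨k - 2, by omega⟩ = σ ⟨k - 1, by omega⟩ := by
      rw [h2 h2k, hw]
      exact Fin.ext hv0
    have h3 := congrArg Fin.val (σ.injective he)
    simp only [Fin.val_mk] at h3
    omega
  · have hcond : (w : ℕ) - 1 + 2 < k := by omega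
    have h1v := h1 _ hcond
    have he : σ ⟨(w : ℕ) - 1, by omega⟩ = σ ⟨k - 2, by omega⟩ :=
      h1v.trans (by rw [hw]; exact Fin.ext (by simp only [Fin.val_mk]; omega))
    have h3 := congrArg Fin.val (σ.injective he)
    simp only [Fin.val_mk] at h3
    omega

def piC (hkn : k < n) (j : Fin n) : Equiv.Perm (Fin n) :=
  Equiv.swap ⟨k - 1, by omega⟩ ⟨k, hkn⟩ * Equiv.swap ⟨k, hkn⟩ j

lemma piC_fix (hkn : k < n) (j : Fin n) (hj : k ≤ (j : ℕ)) (x : Fin n) (hx : (x : ℕ) < k - 1) :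
    piC n k hkn j x = x := by
  have h1 : Equiv.swap (⟨k, hkn⟩ : Fin n) j x = x :=
    Equiv.swap_apply_of_ne_of_ne (Fin.ne_of_val_ne (by show (x:ℕ) ≠ k; omega))
      (Fin.ne_of_val_ne (by omega))
  have h2 : Equiv.swap (⟨k - 1, by omega⟩ : Fin n) (⟨k, hkn⟩ : Fin n) x = x :=
    Equiv.swap_apply_of_ne_of_ne (Fin.ne_of_val_ne (by show (x:ℕ) ≠ k - 1; omega))
      (Fin.ne_of_val_ne (by show (x:ℕ) ≠ k; omega))
  show Equiv.swap _ _ (Equiv.swap _ _ x) = x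
  rw [h1, h2]

lemma piC_j (hkn : k < n) (j : Fin n) (hj : k ≤ (j : ℕ)) :
    piC n k hkn j j = ⟨k - 1, by omega⟩ := by
  show Equiv.swap _ _ (Equiv.swap _ _ j) = _
  rw [Equiv.swap_apply_right, Equiv.swap_apply_right]

lemma piC_km1 (hkn : k < n) (hk : 1 ≤ k) (j : Fin n) (hj : k ≤ (j : ℕ)) :
    piC n k hkn j ⟨k - 1, by omega⟩ = ⟨k, hkn⟩ := by
  have h1 : Equiv.swap (⟨k, hkn⟩ : Fin n) j ⟨k - 1, by omega⟩ = ⟨k - 1, by omega⟩ :=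
    Equiv.swap_apply_of_ne_of_ne (Fin.ne_of_val_ne (by show k - 1 ≠ k; omega))
      (Fin.ne_of_val_ne (by show k - 1 ≠ (j:ℕ); omega))
  show Equiv.swap _ _ (Equiv.swap _ _ _) = _
  rw [h1, Equiv.swap_apply_left]

lemma piC_inv_fix (hkn : k < n) (j : Fin n) (hj : k ≤ (j : ℕ)) (x : Fin n) (hx : (x : ℕ) < k - 1) :
    (piC n k hkn j)⁻¹ x = x := by
  conv_lhs => rw [← piC_fix n k hkn j hj x hx]
  exact Equiv.symm_apply_apply _ _

lemma piC_inv_km1 (hkn : k < n) (hk : 1 ≤ k) (j : Fin n) (hj : k ≤ (j : ℕ)) :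
    (piC n k hkn j)⁻¹ ⟨k - 1, by omega⟩ = j := by
  conv_lhs => rw [← piC_j n k hkn j hj]
  exact Equiv.symm_apply_apply _ _

lemma piC_inv_k (hkn : k < n) (hk : 1 ≤ k) (j : Fin n) (hj : k ≤ (j : ℕ)) :
    (piC n k hkn j)⁻¹ ⟨k, hkn⟩ = ⟨k - 1, by omega⟩ := by
  conv_lhs => rw [← piC_km1 n k hkn hk j hj]
  exact Equiv.symm_apply_apply _ _
end

section
variable (n k : ℕ)

lemma conj_fwd (hk : 1 ≤ k) (hkn : k < n) (j : Fin n) (hj : k ≤ (j : ℕ)) (σ : Equiv.Perm (Fin n))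
    (hC : σ ∈ cosetC n k) (hm : σ ⟨k - 2, by omega⟩ = j) :
    piC n k hkn j * σ * (piC n k hkn j)⁻¹ ∈ cosetC n (k + 1) := by
  obtain ⟨h1, h2⟩ := (mem_cosetC_iff' n k hk hkn.le σ).1 hC
  rw [mem_cosetC_iff' n (k + 1) (by omega) (by omega)]
  constructor
  · intro i hi
    rw [Equiv.Perm.mul_apply, Equiv.Perm.mul_apply,
      piC_inv_fix n k hkn j hj _ (show ((⟨i, by omega⟩ : Fin n) : ℕ) < k - 1 by simp; omega)]
    by_cases hcase : i + 2 < k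
    · rw [h1 i hcase]
      have := piC_fix n k hkn j hj ⟨i + 1, by omega⟩ (by simp; omega)
      rw [this]
    · have hik : i = k - 2 := by omega
      subst hik
      rw [hm, piC_j n k hkn j hj]
      exact Fin.ext (by simp; omega)
  · intro _
    have he : (⟨k + 1 - 1, by omega⟩ : Fin n) = ⟨k, hkn⟩ := Fin.ext (by simp)
    rw [Equiv.Perm.mul_apply, Equiv.Perm.mul_apply, he, piC_inv_k n k hkn hk j hj]
    by_cases h2k : 2 ≤ k
    · rw [h2 h2k]
      have := piC_fix n k hkn j hj ⟨0, by omega⟩ (by simp; omega)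
      rw [this]
    · have he2 : (⟨k - 1, by omega⟩ : Fin n) = ⟨k - 2, by omega⟩ := Fin.ext (by simp; omega)
      rw [he2, hm, piC_j n k hkn j hj]
      exact Fin.ext (by simp; omega)

lemma conj_bwd (hk : 1 ≤ k) (hkn : k < n) (j : Fin n) (hj : k ≤ (j : ℕ))
    (τ : Equiv.Perm (Fin n)) (hC : τ ∈ cosetC n (k + 1)) :
    ((piC n k hkn j)⁻¹ * τ * piC n k hkn j ∈ cosetC n k) ∧
      ((piC n k hkn j)⁻¹ * τ * piC n k hkn j) ⟨k - 2, by omega⟩ = j := by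
  obtain ⟨h1, h2⟩ := (mem_cosetC_iff' n (k + 1) (by omega) (by omega) τ).1 hC
  have hτk : τ ⟨k, hkn⟩ = ⟨0, by omega⟩ := by
    have h2' := h2 (by omega)
    have he : (⟨k + 1 - 1, by omega⟩ : Fin n) = ⟨k, hkn⟩ := Fin.ext (by simp)
    rw [he] at h2'
    exact h2'
  constructor
  · rw [mem_cosetC_iff' n k hk hkn.le]
    refine ⟨fun i hi => ?_, fun h2k => ?_⟩
    · rw [Equiv.Perm.mul_apply, Equiv.Perm.mul_apply,
        piC_fix n k hkn j hj _ (show ((⟨i, by omega⟩ : Fin n) : ℕ) < k - 1 by simp; omega),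
        h1 i (by omega)]
      exact piC_inv_fix n k hkn j hj _ (by simp; omega)
    · rw [Equiv.Perm.mul_apply, Equiv.Perm.mul_apply, piC_km1 n k hkn hk j hj, hτk]
      exact piC_inv_fix n k hkn j hj _ (by simp; omega)
  · by_cases h2k : 2 ≤ k
    · rw [Equiv.Perm.mul_apply, Equiv.Perm.mul_apply,
        piC_fix n k hkn j hj _ (show ((⟨k - 2, by omega⟩ : Fin n) : ℕ) < k - 1 by simp; omega),
        h1 (k - 2) (by omega)]
      have he : (⟨k - 2 + 1, by omega⟩ : Fin n) = ⟨k - 1, by omega⟩ := Fin.ext (by simp; omega)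
      rw [he]
      exact piC_inv_km1 n k hkn hk j hj
    · have he : (⟨k - 2, by omega⟩ : Fin n) = ⟨k - 1, by omega⟩ := Fin.ext (by simp; omega)
      rw [Equiv.Perm.mul_apply, Equiv.Perm.mul_apply, he, piC_km1 n k hkn hk j hj, hτk]
      have he0 : (⟨0, by omega⟩ : Fin n) = ⟨k - 1, by omega⟩ := Fin.ext (by simp; omega)
      rw [he0]
      exact piC_inv_km1 n k hkn hk j hj
end

section
variable (n k q : ℕ)

def FC (hkn : k < n) (p : Fin n × Equiv.Perm (Fin n)) : Equiv.Perm (Fin n) :=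
  (piC n k hkn p.1)⁻¹ * p.2 * piC n k hkn p.1

lemma open_eq_image (hk : 1 ≤ k) (hkn : k < n) :
    {σ : Equiv.Perm (Fin n) | σ ∈ cosetC n k ∧ (∀ x, ¬ Function.minimalPeriod ⇑σ x ∣ q) ∧
        k ≤ ((σ ⟨k - 2, by omega⟩ : Fin n) : ℕ)} =
      (FC n k hkn) '' ({j : Fin n | k ≤ (j : ℕ)} ×ˢ
        {τ | τ ∈ cosetC n (k + 1) ∧ ∀ x, ¬ Function.minimalPeriod ⇑τ x ∣ q}) := by
  ext σ
  simp only [Set.mem_setOf_eq, Set.mem_image, Set.mem_prod, Prod.exists]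
  constructor
  · rintro ⟨hC, hP, hm⟩
    refine ⟨σ ⟨k - 2, by omega⟩, piC n k hkn (σ ⟨k - 2, by omega⟩) * σ *
      (piC n k hkn (σ ⟨k - 2, by omega⟩))⁻¹, ⟨hm, ?_, ?_⟩, ?_⟩
    · exact conj_fwd n k hk hkn _ hm σ hC rfl
    · exact NoCycleLenDvd_conj _ σ hP
    · show _ * (_ * σ * _) * _ = σ
      group
  · rintro ⟨j, τ, ⟨hjJ, hτC, hτP⟩, rfl⟩
    obtain ⟨hC, hm⟩ := conj_bwd n k hk hkn j hjJ τ hτC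
    refine ⟨hC, ?_, ?_⟩
    · have := NoCycleLenDvd_conj (piC n k hkn j)⁻¹ τ hτP
      rwa [inv_inv] at this
    · show ((FC n k hkn (j, τ)) ⟨k - 2, by omega⟩ : ℕ) ≥ k
      rw [show FC n k hkn (j, τ) ⟨k - 2, by omega⟩ = j from hm]
      exact hjJ

lemma FC_injOn (hk : 1 ≤ k) (hkn : k < n) :
    Set.InjOn (FC n k hkn)
      ({j : Fin n | k ≤ (j : ℕ)} ×ˢ {τ | τ ∈ cosetC n (k + 1)}) := by
  rintro ⟨j, τ⟩ ⟨hj, hτ⟩ ⟨j', τ'⟩ ⟨hj', hτ'⟩ heq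
  have h1 := (conj_bwd n k hk hkn j hj τ hτ).2
  have h2 := (conj_bwd n k hk hkn j' hj' τ' hτ').2
  have hjj : j = j' := by
    rw [← h1, ← h2]
    show FC n k hkn (j, τ) _ = FC n k hkn (j', τ') _
    rw [heq]
  subst hjj
  have hττ : τ = τ' := by
    have h3 : (piC n k hkn j)⁻¹ * τ * piC n k hkn j =
        (piC n k hkn j)⁻¹ * τ' * piC n k hkn j := heq
    exact mul_left_cancel (mul_right_cancel h3)
  rw [hττ]
end


section
variable (n k q : ℕ)

lemma ncard_J (hkn : k ≤ n) : ({j : Fin n | k ≤ (j : ℕ)}).ncard = n - k := by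
  rw [← Nat.card_coe_set_eq]
  have e : Fin (n - k) ≃ ↥{j : Fin n | k ≤ (j : ℕ)} := eEquiv n k hkn
  rw [← Nat.card_congr e]
  simp [Nat.card_eq_fintype_card]

lemma ncard_open (hk : 1 ≤ k) (hkn : k < n) :
    {σ : Equiv.Perm (Fin n) | σ ∈ cosetC n k ∧ (∀ x, ¬ Function.minimalPeriod ⇑σ x ∣ q) ∧
        k ≤ ((σ ⟨k - 2, by omega⟩ : Fin n) : ℕ)}.ncard =
      (n - k) * {τ : Equiv.Perm (Fin n) | τ ∈ cosetC n (k + 1) ∧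
        ∀ x, ¬ Function.minimalPeriod ⇑τ x ∣ q}.ncard := by
  rw [open_eq_image n k q hk hkn,
    Set.ncard_image_of_injOn ((FC_injOn n k hk hkn).mono
      (Set.prod_mono_right (fun τ hτ => hτ.1)))]
  rw [← Nat.card_coe_set_eq, Nat.card_congr (Equiv.Set.prod _ _), Nat.card_prod,
    Nat.card_coe_set_eq, Nat.card_coe_set_eq, ncard_J n k hkn.le]


end

theorem stmt_7 (q n k : ℕ) (hk : 1 ≤ k) (hkn : k < n) :
    {σ ∈ cosetC n k | NoCycleLenDvd q σ}.ncard =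
      (if ¬ k ∣ q then 1 else 0) *
          {σ : Equiv.Perm (Fin (n - k)) | NoCycleLenDvd q σ}.ncard +
        (n - k) * {σ ∈ cosetC n (k + 1) | NoCycleLenDvd q σ}.ncard := by
  have hkn' : k ≤ n := hkn.le
  have hsplit : {σ ∈ cosetC n k | NoCycleLenDvd q σ} =
      {σ : Equiv.Perm (Fin n) | σ ∈ cosetC n k ∧ (∀ x, ¬ Function.minimalPeriod ⇑σ x ∣ q) ∧
          ((σ ⟨k - 2, by omega⟩ : Fin n) : ℕ) = k - 1} ∪
        {σ : Equiv.Perm (Fin n) | σ ∈ cosetC n k ∧ (∀ x, ¬ Function.minimalPeriod ⇑σ x ∣ q) ∧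
          k ≤ ((σ ⟨k - 2, by omega⟩ : Fin n) : ℕ)} := by
    ext σ
    simp only [Set.mem_sep_iff, Set.mem_union, Set.mem_setOf_eq, NoCycleLenDvd]
    constructor
    · rintro ⟨hC, hP⟩
      rcases dichotomy n k hk hkn' σ hC with h | h
      · exact Or.inl ⟨hC, hP, h⟩
      · exact Or.inr ⟨hC, hP, h⟩
    · rintro (⟨hC, hP, _⟩ | ⟨hC, hP, _⟩) <;> exact ⟨hC, hP⟩
  rw [hsplit, Set.ncard_union_eq ?disj (Set.toFinite _) (Set.toFinite _)]
  case disj =>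
    rw [Set.disjoint_left]
    rintro σ ⟨_, _, h1⟩ ⟨_, _, h2⟩
    omega
  rw [ncard_closed n k q hk hkn', ncard_open n k q hk hkn]
  rfl
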